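/- Let M be positive definite self-adjoint with M = F*F, F invertible. For A ∈ ℂ^{n×n}, z ∈ ℂ, ε ≥ 0: there exists u with u*Mu = 1 and u*(A − zM)* M^{-1} (A − zM) u ≤ ε² if and only if the smallest singular value of F^{-*}AF^{-1} − zI is at most ε. -/

import Mathlib

open Matrix
open scoped ComplexOrder

noncomputable def matCLM {n : ℕ} (A : Matrix (Fin n) (Fin n) ℂ) :
    EuclideanSpace ℂ (Fin n) →L[ℂ] EuclideanSpace ℂ (Fin n) :=
  Matrix.toEuclideanCLM (𝕜 := ℂ) A

noncomputable def smallestSingVal {n : ℕ} (A : Matrix (Fin n) (Fin n) ℂ) : ℝ :=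
  sInf {r : ℝ | ∃ u : EuclideanSpace ℂ (Fin n), ‖u‖ = 1 ∧ r = ‖matCLM A u‖}

private lemma quad_eq {n : ℕ} (C : Matrix (Fin n) (Fin n) ℂ) (x : Fin n → ℂ) :
    star x ⬝ᵥ (Cᴴ * C).mulVec x =
      ((‖(WithLp.equiv 2 (Fin n → ℂ)).symm (C.mulVec x)‖ : ℂ)) ^ 2 := by
  rw [← Matrix.mulVec_mulVec, Matrix.dotProduct_mulVec, ← Matrix.star_mulVec,
    dotProduct_comm, ← EuclideanSpace.inner_toLp_toLp, inner_self_eq_norm_sq_to_K]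
  rfl

private lemma matCLM_apply {n : ℕ} (A : Matrix (Fin n) (Fin n) ℂ) (x : Fin n → ℂ) :
    matCLM A ((WithLp.equiv 2 (Fin n → ℂ)).symm x) =
      (WithLp.equiv 2 (Fin n → ℂ)).symm (A.mulVec x) :=
  Matrix.toEuclideanCLM_toLp A x

set_option maxHeartbeats 1000000 in
theorem stmt12 {n : ℕ} (hn : 0 < n) (A F M : Matrix (Fin n) (Fin n) ℂ)
    (hM : M.PosDef) (hF : IsUnit F.det) (hMF : M = Fᴴ * F) (z : ℂ) (ε : ℝ) (hε : 0 ≤ ε) :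
    (∃ u : Fin n → ℂ, star u ⬝ᵥ M.mulVec u = 1 ∧
        (star u ⬝ᵥ ((A - z • M)ᴴ * M⁻¹ * (A - z • M)).mulVec u).re ≤ ε ^ 2) ↔
      smallestSingVal ((Fᴴ)⁻¹ * A * F⁻¹ - z • (1 : Matrix (Fin n) (Fin n) ℂ)) ≤ ε := by
  have hFH : IsUnit (Fᴴ).det := by
    rw [Matrix.det_conjTranspose]; exact hF.star
  set B : Matrix (Fin n) (Fin n) ℂ := (Fᴴ)⁻¹ * A * F⁻¹ - z • (1 : Matrix (Fin n) (Fin n) ℂ)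
    with hB
  have hFiF : F⁻¹ * F = 1 := Matrix.nonsing_inv_mul F hF
  have hFFi : F * F⁻¹ = 1 := Matrix.mul_nonsing_inv F hF
  have hFHiFH : Fᴴ * (Fᴴ)⁻¹ = 1 := Matrix.mul_nonsing_inv _ hFH
  have hFHFHi : (Fᴴ)⁻¹ * Fᴴ = 1 := Matrix.nonsing_inv_mul _ hFH
  have hMinv : M⁻¹ = F⁻¹ * (Fᴴ)⁻¹ := by
    rw [hMF, Matrix.mul_inv_rev]
  have hAzM : A - z • M = Fᴴ * (B * F) := by
    rw [hB, hMF, sub_mul, mul_sub]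
    congr 1
    · simp only [← Matrix.mul_assoc]
      rw [hFHiFH, Matrix.one_mul, Matrix.mul_assoc, hFiF, Matrix.mul_one]
    · rw [Matrix.smul_mul, Matrix.one_mul, Matrix.mul_smul]
  have hFMF : F * M⁻¹ * Fᴴ = 1 := by
    rw [hMinv]
    simp only [← Matrix.mul_assoc]
    rw [hFFi, Matrix.one_mul, hFHFHi]
  have hquad : (A - z • M)ᴴ * M⁻¹ * (A - z • M) = (B * F)ᴴ * (B * F) := by
    rw [hAzM, Matrix.conjTranspose_mul, Matrix.conjTranspose_conjTranspose]
    calc (B * F)ᴴ * F * M⁻¹ * (Fᴴ * (B * F))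
        = (B * F)ᴴ * ((F * M⁻¹ * Fᴴ) * (B * F)) := by
          simp only [Matrix.mul_assoc]
      _ = (B * F)ᴴ * (B * F) := by
          rw [hFMF, Matrix.one_mul]
  -- key equivalence with unit vectors
  have key : (∃ u : Fin n → ℂ, star u ⬝ᵥ M.mulVec u = 1 ∧
        (star u ⬝ᵥ ((A - z • M)ᴴ * M⁻¹ * (A - z • M)).mulVec u).re ≤ ε ^ 2) ↔
      (∃ v : EuclideanSpace ℂ (Fin n), ‖v‖ = 1 ∧ ‖matCLM B v‖ ≤ ε) := by
    constructor
    · rintro ⟨u, hu1, hu2⟩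
      set v : EuclideanSpace ℂ (Fin n) := (WithLp.equiv 2 (Fin n → ℂ)).symm (F.mulVec u)
        with hv
      have hnv : ‖v‖ = 1 := by
        have h1 : star u ⬝ᵥ M.mulVec u = ((‖v‖ : ℂ)) ^ 2 := by
          rw [hMF]; exact quad_eq F u
        rw [hu1] at h1
        have h2 := congrArg Complex.re h1.symm
        rw [← Complex.ofReal_pow, Complex.ofReal_re, Complex.one_re] at h2
        nlinarith [norm_nonneg v]
      refine ⟨v, hnv, ?_⟩
      have h3 : (star u ⬝ᵥ ((A - z • M)ᴴ * M⁻¹ * (A - z • M)).mulVec u)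
          = ((‖matCLM B v‖ : ℂ)) ^ 2 := by
        rw [hquad, quad_eq (B * F) u]
        have h4 : (WithLp.equiv 2 (Fin n → ℂ)).symm ((B * F).mulVec u) = matCLM B v := by
          rw [hv, matCLM_apply, Matrix.mulVec_mulVec]
        rw [h4]
      rw [h3, ← Complex.ofReal_pow, Complex.ofReal_re] at hu2
      nlinarith [norm_nonneg (matCLM B v)]
    · rintro ⟨v, hv1, hv2⟩
      refine ⟨F⁻¹.mulVec (WithLp.equiv 2 (Fin n → ℂ) v), ?_, ?_⟩
      · have hFu : F.mulVec (F⁻¹.mulVec (WithLp.equiv 2 (Fin n → ℂ) v)) =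
            WithLp.equiv 2 (Fin n → ℂ) v := by
          rw [Matrix.mulVec_mulVec, hFFi, Matrix.one_mulVec]
        rw [hMF, quad_eq F _, hFu]
        simp only [(WithLp.equiv 2 (Fin n → ℂ)).symm_apply_apply]
        rw [hv1]; norm_num
      · have hFu : F.mulVec (F⁻¹.mulVec (WithLp.equiv 2 (Fin n → ℂ) v)) =
            WithLp.equiv 2 (Fin n → ℂ) v := by
          rw [Matrix.mulVec_mulVec, hFFi, Matrix.one_mulVec]
        have h3 : (star (F⁻¹.mulVec (WithLp.equiv 2 (Fin n → ℂ) v)) ⬝ᵥ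
            ((A - z • M)ᴴ * M⁻¹ * (A - z • M)).mulVec (F⁻¹.mulVec (WithLp.equiv 2 (Fin n → ℂ) v)))
            = ((‖matCLM B v‖ : ℂ)) ^ 2 := by
          rw [hquad, quad_eq (B * F) _]
          have h4 : (WithLp.equiv 2 (Fin n → ℂ)).symm
              ((B * F).mulVec (F⁻¹.mulVec (WithLp.equiv 2 (Fin n → ℂ) v))) = matCLM B v := by
            rw [← Matrix.mulVec_mulVec, hFu]
            conv_rhs => rw [show v = (WithLp.equiv 2 (Fin n → ℂ)).symm
              (WithLp.equiv 2 (Fin n → ℂ) v) from rfl]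
            rw [matCLM_apply]
          rw [h4]
        rw [h3, ← Complex.ofReal_pow, Complex.ofReal_re]
        nlinarith [norm_nonneg (matCLM B v)]
  rw [key]
  -- now handle the sInf
  set S : Set ℝ := {r : ℝ | ∃ u : EuclideanSpace ℂ (Fin n), ‖u‖ = 1 ∧ r = ‖matCLM B u‖}
    with hS
  have hSim : S = (fun u : EuclideanSpace ℂ (Fin n) => ‖matCLM B u‖) ''
      Metric.sphere (0 : EuclideanSpace ℂ (Fin n)) 1 := by
    ext r
    simp only [hS, Set.mem_setOf_eq, Set.mem_image, mem_sphere_iff_norm, sub_zero]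
    exact ⟨fun ⟨u, h1, h2⟩ => ⟨u, h1, h2.symm⟩, fun ⟨u, h1, h2⟩ => ⟨u, h1, h2.symm⟩⟩
  have hne : S.Nonempty := by
    refine ⟨‖matCLM B (EuclideanSpace.single ⟨0, hn⟩ 1)‖,
      EuclideanSpace.single ⟨0, hn⟩ 1, ?_, rfl⟩
    rw [EuclideanSpace.norm_single]; norm_num
  have hcpt : IsCompact S := by
    rw [hSim]
    exact (isCompact_sphere 0 1).image ((matCLM B).continuous.norm)
  have hbdd : BddBelow S := by
    refine ⟨0, fun r hr => ?_⟩
    obtain ⟨u, -, hru⟩ := hr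
    rw [hru]; exact norm_nonneg _
  constructor
  · rintro ⟨v, hv1, hv2⟩
    exact le_trans (csInf_le hbdd ⟨v, hv1, rfl⟩) hv2
  · intro hle
    have hmem : sInf S ∈ S := hcpt.sInf_mem hne
    obtain ⟨v, hv1, hv2⟩ := hmem
    exact ⟨v, hv1, hv2 ▸ hle⟩
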